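/- Let R be a commutative ring, t, a, b ∈ R with a and b nonzerodivisors in R, and suppose (a, b) is a regular sequence in R/(tⁿ) for a fixed n ≥ 1 (i.e. a is a nonzerodivisor in R/(tⁿ) and b is a nonzerodivisor in R/(tⁿ, a)). Then inside the localization (R/(tⁿ))[(ab)⁻¹], the intersection of the subrings (R/(tⁿ))[a⁻¹] and (R/(tⁿ))[b⁻¹] equals R/(tⁿ). Precisely: if f ∈ (R/(tⁿ))[(ab)⁻¹] can be written both as g/aˡ with g ∈ R/(tⁿ) and as h/bᵏ with h ∈ R/(tⁿ), then f lies in the image of R/(tⁿ). -/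

import Mathlib

private lemma key_aux {S L : Type*} [CommRing S] [CommRing L] [Algebra S L]
    (aS bS : S) (hu : IsUnit (algebraMap S L aS))
    (haS : aS ∈ nonZeroDivisors S)
    (hbSa : Ideal.Quotient.mk (Ideal.span {aS}) bS ∈
      nonZeroDivisors (S ⧸ Ideal.span {aS})) :
    ∀ (l : ℕ) (k : ℕ) (g h : S) (f : L),
      algebraMap S L aS ^ l * f = algebraMap S L g →
      algebraMap S L bS ^ k * f = algebraMap S L h →
      bS ^ k * g = aS ^ l * h →
      ∃ s : S, f = algebraMap S L s := by
  intro l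
  induction l with
  | zero =>
    intro k g h f hg _ _
    exact ⟨g, by simpa using hg⟩
  | succ l ih =>
    intro k g h f hg hh hrel
    -- g ∈ (aS)
    have hmem : bS ^ k * g ∈ Ideal.span {aS} := by
      rw [hrel, pow_succ']
      exact Ideal.mem_span_singleton.mpr ⟨aS ^ l * h, by ring⟩
    have hg0 : Ideal.Quotient.mk (Ideal.span {aS}) g = 0 := by
      have h1 : Ideal.Quotient.mk (Ideal.span {aS}) (bS ^ k * g) = 0 :=
        (Ideal.Quotient.eq_zero_iff_mem).mpr hmem
      have h2 : Ideal.Quotient.mk (Ideal.span {aS}) g *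
          (Ideal.Quotient.mk (Ideal.span {aS}) bS) ^ k = 0 := by
        rw [← map_pow, mul_comm, ← map_mul, h1]
      exact (pow_mem hbSa k).2 _ h2
    obtain ⟨g', hg'⟩ := Ideal.mem_span_singleton.mp
      (Ideal.Quotient.eq_zero_iff_mem.mp hg0)
    -- cancel one aS
    have hg2 : algebraMap S L aS ^ l * f = algebraMap S L g' := by
      apply hu.mul_left_cancel
      rw [← mul_assoc, ← pow_succ', hg, hg', map_mul]
    have hrel2 : bS ^ k * g' = aS ^ l * h := by
      apply mul_cancel_left_mem_nonZeroDivisors haS |>.mp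
      calc aS * (bS ^ k * g') = bS ^ k * (aS * g') := by ring
        _ = bS ^ k * g := by rw [← hg']
        _ = aS ^ (l + 1) * h := hrel
        _ = aS * (aS ^ l * h) := by ring
    exact ih k g' h f hg2 (by exact hh) hrel2

/-- Let `R` be a commutative ring, `t, a, b ∈ R` with `a`, `b`
nonzerodivisors in `R`, `n ≥ 1`, and suppose `(a, b)` is a regular sequence in
`S := R/(tⁿ)` (i.e. `a` is a nonzerodivisor in `S` and `b` is a nonzerodivisor in
`S/(a)`).  Then inside `S[(ab)⁻¹]` the intersection of `S[a⁻¹]` and `S[b⁻¹]` is `S`: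
any `f` that can be written both as `g/aˡ` and as `h/bᵏ` lies in the image of `S`. -/
theorem stmt1 {R : Type*} [CommRing R] (t a b : R) (n : ℕ) (hn : 1 ≤ n)
    (ha : a ∈ nonZeroDivisors R) (hb : b ∈ nonZeroDivisors R)
    (haS : Ideal.Quotient.mk (Ideal.span {t ^ n}) a ∈
      nonZeroDivisors (R ⧸ Ideal.span {t ^ n}))
    (hbSa : Ideal.Quotient.mk
        (Ideal.span {Ideal.Quotient.mk (Ideal.span {t ^ n}) a}) (Ideal.Quotient.mk (Ideal.span {t ^ n}) b) ∈
      nonZeroDivisors ((R ⧸ Ideal.span {t ^ n}) ⧸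
        Ideal.span {Ideal.Quotient.mk (Ideal.span {t ^ n}) a}))
    (f : Localization.Away
      (Ideal.Quotient.mk (Ideal.span {t ^ n}) a * Ideal.Quotient.mk (Ideal.span {t ^ n}) b))
    (hfa : ∃ (g : R ⧸ Ideal.span {t ^ n}) (l : ℕ),
      algebraMap _ _ (Ideal.Quotient.mk (Ideal.span {t ^ n}) a) ^ l * f =
        algebraMap _ _ g)
    (hfb : ∃ (h : R ⧸ Ideal.span {t ^ n}) (k : ℕ),
      algebraMap _ _ (Ideal.Quotient.mk (Ideal.span {t ^ n}) b) ^ k * f =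
        algebraMap _ _ h) :
    ∃ s : R ⧸ Ideal.span {t ^ n}, f = algebraMap _ _ s := by
  obtain ⟨g, l, hg⟩ := hfa
  obtain ⟨h, k, hh⟩ := hfb
  have hab : IsUnit (algebraMap _ (Localization.Away
      (Ideal.Quotient.mk (Ideal.span {t ^ n}) a * Ideal.Quotient.mk (Ideal.span {t ^ n}) b))
      (Ideal.Quotient.mk (Ideal.span {t ^ n}) a * Ideal.Quotient.mk (Ideal.span {t ^ n}) b)) :=
    IsLocalization.map_units _ ⟨_, Submonoid.mem_powers _⟩
  have hua : IsUnit (algebraMap _ (Localization.Away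
      (Ideal.Quotient.mk (Ideal.span {t ^ n}) a * Ideal.Quotient.mk (Ideal.span {t ^ n}) b))
      (Ideal.Quotient.mk (Ideal.span {t ^ n}) a)) := by
    rw [map_mul] at hab
    exact isUnit_of_mul_isUnit_left hab
  have heq : algebraMap _ (Localization.Away
      (Ideal.Quotient.mk (Ideal.span {t ^ n}) a * Ideal.Quotient.mk (Ideal.span {t ^ n}) b))
      (Ideal.Quotient.mk (Ideal.span {t ^ n}) b ^ k * g) =
      algebraMap _ _ (Ideal.Quotient.mk (Ideal.span {t ^ n}) a ^ l * h) := by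
    rw [map_mul, map_mul, map_pow, map_pow, ← hg, ← hh]
    ring
  obtain ⟨c, hc⟩ := IsLocalization.exists_of_eq
    (M := Submonoid.powers (Ideal.Quotient.mk (Ideal.span {t ^ n}) a *
      Ideal.Quotient.mk (Ideal.span {t ^ n}) b)) heq
  obtain ⟨m, hm⟩ := c.prop
  rw [← hm] at hc
  simp only at hc
  refine key_aux (Ideal.Quotient.mk (Ideal.span {t ^ n}) a)
    (Ideal.Quotient.mk (Ideal.span {t ^ n}) b) hua haS hbSa (l + m) (k + m)
    (Ideal.Quotient.mk (Ideal.span {t ^ n}) a ^ m * g)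
    (Ideal.Quotient.mk (Ideal.span {t ^ n}) b ^ m * h) f ?_ ?_ ?_
  · rw [pow_add, mul_comm _ (_ ^ m), mul_assoc, hg, ← map_pow]; exact (map_mul _ _ _).symm
  · rw [pow_add, mul_comm _ (_ ^ m), mul_assoc, hh, ← map_pow]; exact (map_mul _ _ _).symm
  · calc Ideal.Quotient.mk (Ideal.span {t ^ n}) b ^ (k + m) *
        (Ideal.Quotient.mk (Ideal.span {t ^ n}) a ^ m * g) =
        (Ideal.Quotient.mk (Ideal.span {t ^ n}) a *
          Ideal.Quotient.mk (Ideal.span {t ^ n}) b) ^ m *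
        (Ideal.Quotient.mk (Ideal.span {t ^ n}) b ^ k * g) := by rw [mul_pow]; ring
      _ = (Ideal.Quotient.mk (Ideal.span {t ^ n}) a *
          Ideal.Quotient.mk (Ideal.span {t ^ n}) b) ^ m *
        (Ideal.Quotient.mk (Ideal.span {t ^ n}) a ^ l * h) := hc
      _ = _ := by rw [mul_pow]; ring
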